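/- For every n ≥ 1, the sequence repeating (e_1, e_2, e_3, e_4) n times is the unique nonempty 4-dimensional balanced ballot path of length 4n with semisymmetric height at most 5. -/

import Mathlib

open scoped Classical

/-- Number of steps among the first `i` steps of `P` equal to basis vector `j`. -/
def cnt (k n : ℕ) (P : Fin (k*n) → Fin k) (j : Fin k) (i : ℕ) : ℕ :=
  (Finset.univ.filter (fun t : Fin (k*n) => (t : ℕ) < i ∧ P t = j)).card

/-- `P` is a `k`-dimensional balanced ballot path of length `k*n`:
each basis vector appears exactly `n` times, and every partial sum is
weakly decreasing in coordinates. -/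
def IsBBP (k n : ℕ) (P : Fin (k*n) → Fin k) : Prop :=
  (∀ j : Fin k, cnt k n P j (k*n) = n) ∧
  (∀ i ≤ k*n, ∀ j j' : Fin k, j ≤ j' → cnt k n P j' i ≤ cnt k n P j i)

/-- Semisymmetric height `g_k` of the `i`-th intermediate point of `P`. -/
def ptHt (k n : ℕ) (P : Fin (k*n) → Fin k) (i : ℕ) : ℤ :=
  ∑ j : Fin k, ((k : ℤ) - 1 - 2*(j : ℕ)) * (cnt k n P j i)

/-- The semisymmetric height of path `P` is at most `u`. -/
def HeightLE (k n : ℕ) (P : Fin (k*n) → Fin k) (u : ℤ) : Prop :=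
  ∀ i ≤ k*n, ptHt k n P i ≤ u

/-- The semisymmetric height of path `P` is exactly `u`. -/
def HeightEq (k n : ℕ) (P : Fin (k*n) → Fin k) (u : ℤ) : Prop :=
  HeightLE k n P u ∧ ∃ i ≤ k*n, ptHt k n P i = u

lemma cnt_zero (k n : ℕ) (P : Fin (k*n) → Fin k) (j : Fin k) : cnt k n P j 0 = 0 := by
  simp [cnt]

lemma cnt_succ (k n : ℕ) (P : Fin (k*n) → Fin k) (j : Fin k) (i : ℕ) (hi : i < k*n) :
    cnt k n P j (i+1) = cnt k n P j i + (if P ⟨i, hi⟩ = j then 1 else 0) := by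
  classical
  unfold cnt
  have hset : (Finset.univ.filter (fun t : Fin (k*n) => (t : ℕ) < i+1 ∧ P t = j)) =
      (Finset.univ.filter (fun t : Fin (k*n) => (t : ℕ) < i ∧ P t = j)) ∪
      (Finset.univ.filter (fun t : Fin (k*n) => t = ⟨i, hi⟩ ∧ P t = j)) := by
    ext t
    simp only [Finset.mem_filter, Finset.mem_union, Finset.mem_univ, true_and]
    constructor
    · rintro ⟨h1, h2⟩
      rcases Nat.lt_succ_iff_lt_or_eq.mp h1 with h | h
      · exact Or.inl ⟨h, h2⟩
      · exact Or.inr ⟨Fin.ext h, h2⟩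
    · rintro (⟨h1, h2⟩ | ⟨h1, h2⟩)
      · exact ⟨Nat.lt_succ_of_lt h1, h2⟩
      · refine ⟨?_, h2⟩
        rw [h1]; exact Nat.lt_succ_self i
  rw [hset, Finset.card_union_of_disjoint]
  · congr 1
    by_cases h : P ⟨i, hi⟩ = j
    · rw [if_pos h]
      have : (Finset.univ.filter (fun t : Fin (k*n) => t = ⟨i, hi⟩ ∧ P t = j)) = {⟨i, hi⟩} := by
        ext t
        simp only [Finset.mem_filter, Finset.mem_univ, true_and, Finset.mem_singleton]
        constructor
        · rintro ⟨h1, _⟩; exact h1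
        · rintro rfl; exact ⟨rfl, h⟩
      rw [this]; simp
    · rw [if_neg h]
      have : (Finset.univ.filter (fun t : Fin (k*n) => t = ⟨i, hi⟩ ∧ P t = j)) = ∅ := by
        ext t
        simp only [Finset.mem_filter, Finset.mem_univ, true_and, Finset.notMem_empty, iff_false,
          not_and]
        rintro rfl h2
        exact h h2
      rw [this]; simp
  · rw [Finset.disjoint_left]
    intro t ht1 ht2
    simp only [Finset.mem_filter, Finset.mem_univ, true_and] at ht1 ht2
    have := ht1.1
    rw [ht2.1] at this
    exact absurd this (lt_irrefl i)

lemma cnt_formula (n : ℕ) (P : Fin (4*n) → Fin 4) (i : ℕ) (hi : i ≤ 4*n)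
    (hper : ∀ t : Fin (4*n), (t : ℕ) < i → P t = ⟨(t : ℕ) % 4, Nat.mod_lt _ (by norm_num)⟩) (j : Fin 4) :
    cnt 4 n P j i = (i + 3 - (j : ℕ)) / 4 := by
  induction i with
  | zero =>
    rw [cnt_zero]
    have := j.isLt
    omega
  | succ m ih =>
    have hm : m < 4*n := by omega
    rw [cnt_succ 4 n P j m hm,
      ih (by omega) (fun t ht => hper t (by omega))]
    have hpm : P ⟨m, hm⟩ = ⟨m % 4, by omega⟩ := hper ⟨m, hm⟩ (Nat.lt_succ_self m)
    have hj4 := j.isLt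
    by_cases h : P ⟨m, hm⟩ = j
    · rw [if_pos h]
      have hv : (j : ℕ) = m % 4 := by rw [← h, hpm]
      omega
    · rw [if_neg h]
      have hne : (j : ℕ) ≠ m % 4 := by
        intro hc
        exact h (by rw [hpm]; exact Fin.ext (by simpa using hc.symm))
      omega

lemma key (n : ℕ) (P : Fin (4*n) → Fin 4) (hP : IsBBP 4 n P) (h5 : HeightLE 4 n P 5) :
    ∀ i ≤ 4*n, ∀ t : Fin (4*n), (t : ℕ) < i → P t = ⟨(t : ℕ) % 4, Nat.mod_lt _ (by norm_num)⟩ := by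
  intro i
  induction i with
  | zero => intro _ t ht; omega
  | succ m ih =>
    intro hm1 t ht
    have hm : m < 4*n := by omega
    have hprev := ih (by omega)
    rcases Nat.lt_succ_iff_lt_or_eq.mp ht with h | h
    · exact hprev t h
    · have htm : t = ⟨m, hm⟩ := Fin.ext h
      have hc : ∀ j : Fin 4, cnt 4 n P j m = (m + 3 - (j : ℕ)) / 4 :=
        cnt_formula n P m (by omega) hprev
      have hcs : ∀ j : Fin 4, cnt 4 n P j (m+1) =
          (m + 3 - (j : ℕ)) / 4 + (if (P ⟨m, hm⟩ : ℕ) = (j : ℕ) then 1 else 0) := by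
        intro j
        rw [cnt_succ 4 n P j m hm, hc j]
        congr 1
        simp [Fin.ext_iff]
      have hpv4 : (P ⟨m, hm⟩ : ℕ) < 4 := (P ⟨m, hm⟩).isLt
      have hb := hP.2 (m+1) (by omega)
      have hb01 := hb 0 1 (by decide)
      have hb12 := hb 1 2 (by decide)
      have hb23 := hb 2 3 (by decide)
      rw [hcs 0, hcs 1] at hb01
      rw [hcs 1, hcs 2] at hb12
      rw [hcs 2, hcs 3] at hb23
      have hh := h5 (m+1) (by omega)
      unfold ptHt at hh
      rw [Fin.sum_univ_four, hcs 0, hcs 1, hcs 2, hcs 3] at hh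
      simp only [Fin.val_zero, Fin.val_one, Fin.val_two, show ((3 : Fin 4) : ℕ) = 3 from rfl] at hb01 hb12 hb23 hh
      push_cast at hh
      suffices hgoal : (P ⟨m, hm⟩ : ℕ) = m % 4 by
        rw [htm]
        exact Fin.ext (by simpa using hgoal)
      obtain hv | hv | hv | hv : (P ⟨m, hm⟩ : ℕ) = 0 ∨ (P ⟨m, hm⟩ : ℕ) = 1 ∨
          (P ⟨m, hm⟩ : ℕ) = 2 ∨ (P ⟨m, hm⟩ : ℕ) = 3 := by omega
      all_goals rw [hv] at hb01 hb12 hb23 hh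
      all_goals norm_num at hb01 hb12 hb23 hh
      all_goals omega

lemma periodic_height (n : ℕ) :
    HeightLE 4 n (fun t : Fin (4*n) => (⟨(t : ℕ) % 4, Nat.mod_lt _ (by norm_num)⟩ : Fin 4)) 5 := by
  intro i hi
  have hc := cnt_formula n (fun t : Fin (4*n) => (⟨(t : ℕ) % 4, Nat.mod_lt _ (by norm_num)⟩ : Fin 4)) i hi
    (fun t ht => rfl)
  unfold ptHt
  rw [Fin.sum_univ_four, hc 0, hc 1, hc 2, hc 3]
  simp only [Fin.val_zero, Fin.val_one, Fin.val_two, show ((3 : Fin 4) : ℕ) = 3 from rfl]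
  push_cast
  omega

theorem stmt9 (n : ℕ) (hn : 1 ≤ n) (P : Fin (4*n) → Fin 4) (hP : IsBBP 4 n P) :
    HeightLE 4 n P 5 ↔ P = fun t => ⟨(t : ℕ) % 4, by omega⟩ := by
  constructor
  · intro h5
    funext t
    exact key n P hP h5 (4*n) le_rfl t t.isLt
  · rintro rfl
    exact periodic_height n
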